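/- (Theorem 1, sufficiency.) Let g₁,…,g_m ∈ ℝ[x₁,…,xₙ] with deg(g_i) ≤ 2d, K = {x : g₁(x) ≥ 0,…,g_m(x) ≥ 0}, f ∈ ℝ[x₁,…,xₙ] with deg(f) ≤ 2d, and ε > 0. Suppose y* is a minimizer of the moment relaxation (minimize ⟨f,y⟩ + ε‖y‖ over tms y of degree 2d with y₀ = 1, M_d[y] ⪰ 0, L_{g_i}^{(d)}[y] ⪰ 0 for all i) and that rank M_d[y*] = 1. Then the point u = (y*_{e₁},…,y*_{eₙ}) belongs to K, u is a minimizer of the perturbed problem (minimize f(x) + ε‖[x]_{2d}‖ over x ∈ K), and the optimal values of the two problems are equal (the relaxation is tight). -/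

import Mathlib

open MvPolynomial Finset

/-- The set `ℕⁿ_d` of multi-indices `α ∈ ℕⁿ` with `|α| = α₁ + ⋯ + αₙ ≤ d`. -/
abbrev MIdx (n d : ℕ) : Type := {α : Fin n →₀ ℕ // ∑ i, α i ≤ d}

noncomputable instance MIdx.fintype (n d : ℕ) : Fintype (MIdx n d) := by
  have hfin : {f : Fin n → ℕ | ∑ i, f i ≤ d}.Finite := by
    apply (Set.finite_Icc (0 : Fin n → ℕ) (fun _ => d)).subset
    intro f hf
    refine Set.mem_Icc.mpr ⟨fun i => Nat.zero_le _, fun i => ?_⟩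
    exact le_trans (Finset.single_le_sum (fun j _ => Nat.zero_le (f j)) (Finset.mem_univ i)) hf
  have h2 : {α : Fin n →₀ ℕ | ∑ i, α i ≤ d}.Finite :=
    Set.Finite.preimage (Set.injOn_of_injective (DFunLike.coe_injective (F := Fin n →₀ ℕ))) hfin
  exact h2.fintype

/-- The moment matrix `M_d[y]` of a truncated multi-sequence `y` of degree `2d`,
indexed by `α, β ∈ ℕⁿ_d`, with entries `y_{α+β}`. -/
noncomputable def momMat {n : ℕ} (d : ℕ) (y : MIdx n (2 * d) → ℝ) :
    Matrix (MIdx n d) (MIdx n d) ℝ := fun α β =>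
  y ⟨α.1 + β.1, by
    have hα := α.2; have hβ := β.2
    have h : ∑ i, (α.1 + β.1) i = (∑ i, α.1 i) + ∑ i, β.1 i := by
      simp [Finsupp.add_apply, Finset.sum_add_distrib]
    omega⟩

/-- The localizing matrix `L_p^{(d)}[y]` of a polynomial `p` of degree ≤ 2d at a tms `y`
of degree `2d`, indexed by `α, β ∈ ℕⁿ_t` with `t = d - ⌈deg(p)/2⌉`, with entries
`Σ_γ p_γ y_{α+β+γ}`. -/
noncomputable def locMat {n : ℕ} (d : ℕ) (p : MvPolynomial (Fin n) ℝ)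
    (hp : p.totalDegree ≤ 2 * d) (y : MIdx n (2 * d) → ℝ) :
    Matrix (MIdx n (d - (p.totalDegree + 1) / 2))
      (MIdx n (d - (p.totalDegree + 1) / 2)) ℝ := fun α β =>
  ∑ γ ∈ p.support.attach, p.coeff γ.1 *
    y ⟨α.1 + β.1 + γ.1, by
      have hα := α.2; have hβ := β.2
      have hγ : ∑ i, γ.1 i ≤ p.totalDegree := by
        have h1 := MvPolynomial.le_totalDegree γ.2
        have h2 : (γ.1.sum fun _ e => e) = ∑ i, γ.1 i :=
          Finsupp.sum_fintype _ _ (fun _ => rfl)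
        omega
      have h : ∑ i, (α.1 + β.1 + γ.1) i = ((∑ i, α.1 i) + ∑ i, β.1 i) + ∑ i, γ.1 i := by
        simp [Finsupp.add_apply, Finset.sum_add_distrib]
      omega⟩

/-- The Riesz functional `⟨f, y⟩ = Σ_{α ∈ ℕⁿ_{2d}} f_α y_α`. -/
noncomputable def riesz {n : ℕ} (d : ℕ) (f : MvPolynomial (Fin n) ℝ)
    (y : MIdx n (2 * d) → ℝ) : ℝ :=
  ∑ α : MIdx n (2 * d), f.coeff α.1 * y α

/-- The Euclidean norm of a truncated multi-sequence. -/
noncomputable def tmsNorm {n d : ℕ} (y : MIdx n d → ℝ) : ℝ :=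
  Real.sqrt (∑ α, (y α) ^ 2)

/-- The vector of monomials `[x]_d = (x^α)_{α ∈ ℕⁿ_d}` evaluated at `x`. -/
noncomputable def monVec {n : ℕ} (d : ℕ) (x : Fin n → ℝ) : MIdx n d → ℝ :=
  fun α => ∏ i, x i ^ α.1 i

/-- The coefficient vector `vec(p) ∈ ℝ^{ℕⁿ_{2d}}` of a polynomial `p ∈ ℝ[x]_{2d}`. -/
noncomputable def vecPoly {n : ℕ} (d : ℕ) (p : MvPolynomial (Fin n) ℝ) :
    MIdx n (2 * d) → ℝ := fun α => p.coeff α.1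

/-- `σ` is a sum of squares of polynomials of degree at most `k`. -/
def IsSOSDeg {n : ℕ} (k : ℕ) (σ : MvPolynomial (Fin n) ℝ) : Prop :=
  ∃ (r : ℕ) (s : Fin r → MvPolynomial (Fin n) ℝ),
    (∀ j, (s j).totalDegree ≤ k) ∧ σ = ∑ j, (s j) ^ 2

/-- Membership in the truncated quadratic module `Q(g)_{2d}`. -/
def memQ {n m : ℕ} (d : ℕ) (g : Fin m → MvPolynomial (Fin n) ℝ)
    (q : MvPolynomial (Fin n) ℝ) : Prop :=
  ∃ (σ₀ : MvPolynomial (Fin n) ℝ) (σ : Fin m → MvPolynomial (Fin n) ℝ),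
    IsSOSDeg d σ₀ ∧ (∀ i, IsSOSDeg (d - ((g i).totalDegree + 1) / 2) (σ i)) ∧
    q = σ₀ + ∑ i, g i * σ i


section AuxLemmas

open Matrix

variable {n : ℕ}

lemma sumFin_add (a b : Fin n →₀ ℕ) : ∑ i, (a + b) i = (∑ i, a i) + ∑ i, b i := by
  simp [Finsupp.add_apply, Finset.sum_add_distrib]

lemma sumFin_single (i : Fin n) : ∑ j, (Finsupp.single i 1 : Fin n →₀ ℕ) j = 1 := by
  simp [Finsupp.single_apply]

lemma prodPow_add (u : Fin n → ℝ) (a b : Fin n →₀ ℕ) :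
    ∏ i, u i ^ (a + b) i = (∏ i, u i ^ a i) * ∏ i, u i ^ b i := by
  rw [← Finset.prod_mul_distrib]
  exact Finset.prod_congr rfl fun i _ => by rw [Finsupp.add_apply, pow_add]

lemma prodPow_single (u : Fin n → ℝ) (i : Fin n) :
    ∏ j, u j ^ (Finsupp.single i 1 : Fin n →₀ ℕ) j = u i := by
  rw [Finset.prod_eq_single i]
  · simp
  · intro j _ hj
    rw [Finsupp.single_eq_of_ne' (Ne.symm hj), pow_zero]
  · intro h; exact absurd (Finset.mem_univ i) h

lemma exists_split (k : ℕ) (γ : Fin n →₀ ℕ) (hk : k ≤ ∑ i, γ i) :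
    ∃ a : Fin n →₀ ℕ, (∀ i, a i ≤ γ i) ∧ ∑ i, a i = k := by
  induction k with
  | zero => exact ⟨0, fun i => Nat.zero_le _, by simp⟩
  | succ k ih =>
    obtain ⟨a, hle, hsum⟩ := ih (Nat.le_of_succ_le hk)
    have hex : ∃ i, a i < γ i := by
      by_contra hc
      push_neg at hc
      have := Finset.sum_le_sum (s := Finset.univ) fun i _ => hc i
      omega
    obtain ⟨i, hi⟩ := hex
    refine ⟨a + Finsupp.single i 1, fun j => ?_, by rw [sumFin_add, hsum, sumFin_single]⟩
    rcases eq_or_ne j i with rfl | hne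
    · simp only [Finsupp.add_apply, Finsupp.single_eq_same]
      omega
    · simpa [Finsupp.add_apply, Finsupp.single_eq_of_ne' (Ne.symm hne)] using hle j

lemma support_sum_le (p : MvPolynomial (Fin n) ℝ) {γ : Fin n →₀ ℕ} (hγ : γ ∈ p.support) :
    ∑ i, γ i ≤ p.totalDegree := by
  have h1 := MvPolynomial.le_totalDegree hγ
  have h2 : (γ.sum fun _ e => e) = ∑ i, γ i := Finsupp.sum_fintype _ _ (fun _ => rfl)
  omega

lemma riesz_eq_eval (d : ℕ) (f : MvPolynomial (Fin n) ℝ) (hf : f.totalDegree ≤ 2 * d)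
    (x : Fin n → ℝ) : riesz d f (monVec (2 * d) x) = MvPolynomial.eval x f := by
  classical
  have hmem : ∀ γ : Fin n →₀ ℕ,
      γ ∈ ((Finset.univ : Finset (MIdx n (2 * d))).image Subtype.val) ↔ ∑ i, γ i ≤ 2 * d := by
    intro γ
    simp only [Finset.mem_image, Finset.mem_univ, true_and]
    exact ⟨fun ⟨a, ha⟩ => ha ▸ a.2, fun h => ⟨⟨γ, h⟩, rfl⟩⟩
  have key := Finset.sum_subtype (p := fun γ : Fin n →₀ ℕ => ∑ i, γ i ≤ 2 * d)
    (F := MIdx.fintype n (2 * d))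
    _ hmem (fun γ => f.coeff γ * ∏ i, x i ^ γ i)
  rw [MvPolynomial.eval_eq']
  have hL : riesz d f (monVec (2 * d) x)
      = ∑ γ ∈ ((Finset.univ : Finset (MIdx n (2 * d))).image Subtype.val),
          f.coeff γ * ∏ i, x i ^ γ i := key.symm
  rw [hL]
  symm
  apply Finset.sum_subset
  · intro γ hγ
    exact (hmem γ).mpr (le_trans (support_sum_le f hγ) hf)
  · intro γ _ hγ
    rw [MvPolynomial.notMem_support_iff.mp hγ, zero_mul]

lemma momMat_monVec (d : ℕ) (x : Fin n → ℝ) (a b : MIdx n d) :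
    momMat d (monVec (2 * d) x) a b = (∏ i, x i ^ a.1 i) * ∏ i, x i ^ b.1 i :=
  prodPow_add x a.1 b.1

lemma locMat_monVec (d : ℕ) (p : MvPolynomial (Fin n) ℝ) (hp : p.totalDegree ≤ 2 * d)
    (x : Fin n → ℝ) (a b : MIdx n (d - (p.totalDegree + 1) / 2)) :
    locMat d p hp (monVec (2 * d) x) a b
      = MvPolynomial.eval x p * ((∏ i, x i ^ a.1 i) * ∏ i, x i ^ b.1 i) := by
  have h1 : locMat d p hp (monVec (2 * d) x) a b
      = ∑ γ ∈ p.support.attach, p.coeff γ.1 * ∏ i, x i ^ (a.1 + b.1 + γ.1) i := rfl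
  rw [h1, Finset.sum_attach p.support (fun γ => p.coeff γ * ∏ i, x i ^ (a.1 + b.1 + γ) i),
    MvPolynomial.eval_eq', Finset.sum_mul]
  refine Finset.sum_congr rfl fun γ _ => ?_
  rw [prodPow_add, prodPow_add]
  ring

lemma psd_outer {ι : Type*} [Fintype ι] (c : ℝ) (hc : 0 ≤ c) (v : ι → ℝ)
    (M : Matrix ι ι ℝ) (hM : ∀ a b, M a b = c * (v a * v b)) : M.PosSemidef := by
  refine Matrix.PosSemidef.of_dotProduct_mulVec_nonneg ?_ ?_
  · show Mᴴ = M
    ext a b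
    simp only [Matrix.conjTranspose_apply, hM, star_trivial]
    ring
  · intro z
    have hz : dotProduct (star z) (M *ᵥ z) = c * (∑ i, v i * z i) ^ 2 := by
      simp only [Matrix.mulVec, dotProduct, hM, Pi.star_apply, star_trivial]
      rw [pow_two, Finset.sum_mul_sum, Finset.mul_sum]
      refine Finset.sum_congr rfl fun a _ => ?_
      rw [Finset.mul_sum, Finset.mul_sum]
      refine Finset.sum_congr rfl fun b _ => ?_
      ring
    rw [hz]
    positivity

lemma psd_diag {ι : Type*} [Fintype ι] [DecidableEq ι] {M : Matrix ι ι ℝ}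
    (h : M.PosSemidef) (z : ι) : 0 ≤ M z z := by
  have h2 := h.dotProduct_mulVec_nonneg (Pi.single z 1)
  simpa [Matrix.mulVec, dotProduct, Pi.single_apply, mul_ite, Finset.sum_ite_eq']
    using h2

end AuxLemmas

/-- (Theorem 1, sufficiency.) Suppose `y*` is a minimizer of the moment
relaxation (minimize `⟨f,y⟩ + ε‖y‖` over tms `y` of degree `2d` with `y₀ = 1`,
`M_d[y] ⪰ 0`, `L_{g_i}^{(d)}[y] ⪰ 0` for all `i`) and `rank M_d[y*] = 1`. Then
`u = (y*_{e₁},…,y*_{eₙ})` belongs to `K`, `u` minimizes the perturbed problem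
(minimize `f(x) + ε‖[x]_{2d}‖` over `x ∈ K`), and the two optimal values coincide. -/
theorem stmt11 (n m d : ℕ) (hd : 1 ≤ d) (g : Fin m → MvPolynomial (Fin n) ℝ)
    (hg : ∀ i, (g i).totalDegree ≤ 2 * d)
    (K : Set (Fin n → ℝ)) (hK : K = {x | ∀ i, 0 ≤ MvPolynomial.eval x (g i)})
    (f : MvPolynomial (Fin n) ℝ) (hf : f.totalDegree ≤ 2 * d)
    (ε : ℝ) (hε : 0 < ε)
    (ystar : MIdx n (2 * d) → ℝ)
    (hy0 : ystar ⟨0, by simp⟩ = 1)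
    (hy1 : (momMat d ystar).PosSemidef)
    (hy2 : ∀ i, (locMat d (g i) (hg i) ystar).PosSemidef)
    (hymin : ∀ y : MIdx n (2 * d) → ℝ,
      y ⟨0, by simp⟩ = 1 → (momMat d y).PosSemidef →
      (∀ i, (locMat d (g i) (hg i) y).PosSemidef) →
      riesz d f ystar + ε * tmsNorm ystar ≤ riesz d f y + ε * tmsNorm y)
    (hrank : (momMat d ystar).rank = 1)
    (u : Fin n → ℝ)
    (hu : ∀ i : Fin n,
      u i = ystar ⟨Finsupp.single i 1, by simp [Finsupp.single_apply]; omega⟩) :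
    u ∈ K ∧
    (∀ x ∈ K, MvPolynomial.eval u f + ε * tmsNorm (monVec (2 * d) u) ≤
      MvPolynomial.eval x f + ε * tmsNorm (monVec (2 * d) x)) ∧
    MvPolynomial.eval u f + ε * tmsNorm (monVec (2 * d) u) =
      riesz d f ystar + ε * tmsNorm ystar := by
  classical
  have ycast : ∀ (a b : Fin n →₀ ℕ) (ha : ∑ i, a i ≤ 2 * d) (hb : ∑ i, b i ≤ 2 * d),
      a = b → ystar ⟨a, ha⟩ = ystar ⟨b, hb⟩ := fun a b ha hb h =>
    congrArg ystar (Subtype.ext h)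
  set M := momMat d ystar with hMdef
  set z0 : MIdx n d := ⟨0, by simp⟩ with hz0def
  have hrank' : Module.finrank ℝ ↥(LinearMap.range M.mulVecLin) = 1 := hrank
  have hcolmem : ∀ b : MIdx n d, (fun a => M a b) ∈ LinearMap.range M.mulVecLin := by
    intro b
    refine ⟨Pi.single b 1, ?_⟩
    ext a
    simp [Matrix.mulVecLin_apply, Matrix.mulVec, dotProduct, Pi.single_apply, mul_ite]
  have hM00 : M z0 z0 = 1 :=
    (ycast ((0 : Fin n →₀ ℕ) + 0) 0 (by simp) (by simp) (by simp)).trans hy0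
  have hv0 : (⟨(fun a => M a z0), hcolmem z0⟩ : LinearMap.range M.mulVecLin) ≠ 0 := by
    intro hcon
    have h0 : (fun a => M a z0) = 0 := congrArg Subtype.val hcon
    have h1 := congrFun h0 z0
    rw [hM00] at h1
    simpa using h1
  have hspan := (finrank_eq_one_iff_of_nonzero' _ hv0).mp hrank'
  have hentry : ∀ a b : MIdx n d, M a b = M z0 b * M a z0 := by
    intro a b
    obtain ⟨c, hc⟩ := hspan ⟨fun a => M a b, hcolmem b⟩
    have hc' := congrArg Subtype.val hc
    simp only [SetLike.val_smul] at hc'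
    have h1 := congrFun hc' a
    have h2 := congrFun hc' z0
    simp only [Pi.smul_apply, smul_eq_mul] at h1 h2
    rw [hM00, mul_one] at h2
    rw [← h1, h2]
  have mult : ∀ (a b : Fin n →₀ ℕ) (ha : ∑ i, a i ≤ d) (hb : ∑ i, b i ≤ d)
      (hab : ∑ i, (a + b) i ≤ 2 * d) (ha' : ∑ i, a i ≤ 2 * d) (hb' : ∑ i, b i ≤ 2 * d),
      ystar ⟨a + b, hab⟩ = ystar ⟨a, ha'⟩ * ystar ⟨b, hb'⟩ := by
    intro a b ha hb hab ha' hb'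
    have h := hentry ⟨a, ha⟩ ⟨b, hb⟩
    rw [show M ⟨a, ha⟩ ⟨b, hb⟩ = ystar ⟨a + b, hab⟩ from ycast _ _ _ _ rfl,
      show M ⟨a, ha⟩ z0 = ystar ⟨a, ha'⟩ from ycast _ _ _ _ (add_zero a),
      show M z0 ⟨b, hb⟩ = ystar ⟨b, hb'⟩ from ycast _ _ _ _ (zero_add b)] at h
    rw [h]
    ring
  have key : ∀ s (γ : Fin n →₀ ℕ) (h : ∑ i, γ i ≤ 2 * d), ∑ i, γ i = s →
      ystar ⟨γ, h⟩ = ∏ i, u i ^ γ i := by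
    intro s
    induction s using Nat.strong_induction_on with
    | _ s ih =>
      intro γ h hs
      rcases Nat.eq_zero_or_pos s with rfl | hpos
      · have hγ0 : γ = 0 := by
          ext j
          exact Finset.sum_eq_zero_iff.mp hs j (Finset.mem_univ j)
        subst hγ0
        rw [show ystar ⟨0, h⟩ = 1 from hy0]
        simp
      rcases le_or_gt s d with hsd | hsd
      · have hex : ∃ i, 0 < γ i := by
          by_contra hc
          push_neg at hc
          have : ∑ i, γ i = 0 := Finset.sum_eq_zero fun i _ => Nat.le_zero.mp (hc i)
          omega
        obtain ⟨i, hi⟩ := hex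
        have hsplit : (γ - Finsupp.single i (1:ℕ)) + Finsupp.single i 1 = γ := by
          ext j
          rcases eq_or_ne j i with rfl | hne
          · simp only [Finsupp.add_apply, Finsupp.tsub_apply, Finsupp.single_eq_same]
            omega
          · simp [Finsupp.add_apply, Finsupp.tsub_apply,
              Finsupp.single_eq_of_ne' (Ne.symm hne)]
        have hsum' : ∑ j, (γ - Finsupp.single i (1:ℕ)) j = s - 1 := by
          have h2 := sumFin_add (γ - Finsupp.single i (1:ℕ)) (Finsupp.single i 1)
          rw [hsplit, sumFin_single, hs] at h2
          omega
        have h1 : ∑ j, (γ - Finsupp.single i (1:ℕ)) j ≤ 2 * d := by omega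
        have hsing2 : ∑ j, (Finsupp.single i 1 : Fin n →₀ ℕ) j ≤ 2 * d := by
          rw [sumFin_single]; omega
        have hc1 : ∑ j, (((γ - Finsupp.single i (1:ℕ)) + Finsupp.single i 1 : Fin n →₀ ℕ)) j ≤ 2 * d := by
          rw [hsplit]; exact h
        have hc2 : ∑ j, (γ - Finsupp.single i (1:ℕ)) j ≤ d := by omega
        have hc3 : ∑ j, (Finsupp.single i 1 : Fin n →₀ ℕ) j ≤ d := by
          rw [sumFin_single]; omega
        have hui : ystar ⟨Finsupp.single i 1, hsing2⟩ = u i := (hu i).symm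
        calc ystar ⟨γ, h⟩
            = ystar ⟨(γ - Finsupp.single i (1:ℕ)) + Finsupp.single i 1, hc1⟩ :=
              ycast _ _ _ _ hsplit.symm
          _ = ystar ⟨γ - Finsupp.single i (1:ℕ), h1⟩ * ystar ⟨Finsupp.single i 1, hsing2⟩ :=
              mult _ _ hc2 hc3 hc1 h1 hsing2
          _ = (∏ j, u j ^ (γ - Finsupp.single i (1:ℕ)) j) * u i := by
              rw [ih (s - 1) (by omega) _ h1 hsum', hui]
          _ = ∏ j, u j ^ γ j := by
              conv_rhs => rw [← hsplit]
              rw [prodPow_add, prodPow_single]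
      · obtain ⟨a, hle, hsa⟩ := exists_split d γ (by omega)
        have hab : a + (γ - a) = γ := by
          ext j
          have := hle j
          simp only [Finsupp.add_apply, Finsupp.tsub_apply]
          omega
        have hsb : ∑ j, (γ - a) j = s - d := by
          have h2 := sumFin_add a (γ - a)
          rw [hab, hsa, hs] at h2
          omega
        have hc1 : ∑ j, ((a + (γ - a) : Fin n →₀ ℕ)) j ≤ 2 * d := by rw [hab]; exact h
        have hc2 : ∑ j, a j ≤ d := by omega
        have hc3 : ∑ j, (γ - a) j ≤ d := by omega
        have hc4 : ∑ j, a j ≤ 2 * d := by omega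
        have hc5 : ∑ j, (γ - a) j ≤ 2 * d := by omega
        calc ystar ⟨γ, h⟩
            = ystar ⟨a + (γ - a), hc1⟩ := ycast _ _ _ _ hab.symm
          _ = ystar ⟨a, hc4⟩ * ystar ⟨γ - a, hc5⟩ := mult _ _ hc2 hc3 hc1 hc4 hc5
          _ = (∏ j, u j ^ a j) * ∏ j, u j ^ (γ - a) j := by
              rw [ih d (by omega) a hc4 hsa, ih (s - d) (by omega) _ hc5 hsb]
          _ = ∏ j, u j ^ γ j := by
              conv_rhs => rw [← hab]
              rw [prodPow_add]
  have key' : ∀ (γ : Fin n →₀ ℕ) (hγ : ∑ i, γ i ≤ 2 * d),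
      ystar ⟨γ, hγ⟩ = ∏ i, u i ^ γ i := fun γ hγ => key _ γ hγ rfl
  have heq : ystar = monVec (2 * d) u := funext fun α => key' α.1 α.2
  have huK : ∀ i, 0 ≤ MvPolynomial.eval u (g i) := by
    intro i
    have hdiag : 0 ≤ locMat d (g i) (hg i) ystar ⟨0, by simp⟩ ⟨0, by simp⟩ :=
      psd_diag (hy2 i) _
    rw [heq, locMat_monVec] at hdiag
    simpa using hdiag
  have hfeas : ∀ x : Fin n → ℝ, (∀ i, 0 ≤ MvPolynomial.eval x (g i)) →
      (monVec (2 * d) x) ⟨0, by simp⟩ = 1 ∧ (momMat d (monVec (2 * d) x)).PosSemidef ∧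
      ∀ i, (locMat d (g i) (hg i) (monVec (2 * d) x)).PosSemidef := by
    intro x hx
    refine ⟨by simp [monVec], ?_, ?_⟩
    · exact psd_outer 1 one_pos.le (fun a : MIdx n d => ∏ i, x i ^ a.1 i) _
        (fun a b => by rw [momMat_monVec]; ring)
    · intro i
      exact psd_outer (MvPolynomial.eval x (g i)) (hx i)
        (fun a => ∏ j, x j ^ a.1 j) _ (fun a b => by rw [locMat_monVec])
  have hval : MvPolynomial.eval u f + ε * tmsNorm (monVec (2 * d) u)
      = riesz d f ystar + ε * tmsNorm ystar := by
    rw [heq, riesz_eq_eval d f hf u]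
  refine ⟨?_, ?_, hval⟩
  · rw [hK]
    exact huK
  · intro x hx
    rw [hK] at hx
    obtain ⟨h0, h1, h2⟩ := hfeas x hx
    have hmin := hymin (monVec (2 * d) x) h0 h1 h2
    rw [riesz_eq_eval d f hf x] at hmin
    rw [hval]
    exact hmin
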